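/- arXiv:2307.11879 — 2 statements merged into one kernel-verified Lean document; each statement's English description precedes it below -/
import Mathlib

section
/- Let V be a finite type of nodes, E ⊆ V × V a set of directed edges, and s : V × V → ℕ a security level function. If there exists at least one valid path from a node a to a node b with a ≠ b, then there exists a valid simple path p* from a to b whose bottleneck (the minimum of s over its edges) satisfies bottleneck(p*) ≥ bottleneck(p) for every valid path p from a to b (simple or not). In other words, the widest (maximal-bottleneck) path value from a to b is attained by a simple path. -/
/-- A (nonempty) valid path in the network `(V, E)` from `a` to `b`:
a nonempty list of edges, each belonging to `E`, consecutively connected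
(`dst eᵢ = src e_{i+1}`), starting at `a` and ending at `b`. -/
def IsValidPath {V : Type*} (E : Set (V × V)) (a b : V) (p : List (V × V)) : Prop :=
  (∀ e ∈ p, e ∈ E) ∧ List.Chain' (fun e f => e.2 = f.1) p ∧
    p.head?.map Prod.fst = some a ∧ p.getLast?.map Prod.snd = some b

/-- The nodes traversed by a path: the sources of all edges plus the final destination. -/
def pathNodes {V : Type*} (p : List (V × V)) : List V :=
  p.map Prod.fst ++ (p.getLast?.map Prod.snd).toList

/-- A path is simple if it traverses no node twice. -/
def IsSimplePath {V : Type*} (p : List (V × V)) : Prop :=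
  (pathNodes p).Nodup

/-- The bottleneck of a (nonempty) path: the minimum of `s` over its edges. -/
def bottleneck {V : Type*} (s : V × V → ℕ) (p : List (V × V)) : ℕ :=
  WithTop.untopD 0 ((p.map s).minimum)

section aux
variable {V : Type*}

lemma IsValidPath.ne_nil {E : Set (V × V)} {a b : V} {p : List (V × V)}
    (h : IsValidPath E a b p) : p ≠ [] := by
  rintro rfl
  simp [IsValidPath] at h

lemma pathNodes_eq {p : List (V × V)} (hp : p ≠ []) :
    pathNodes p = p.map Prod.fst ++ [(p.getLast hp).2] := by
  simp [pathNodes, List.getLast?_eq_getLast hp]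

lemma pathNodes_length {p : List (V × V)} (hp : p ≠ []) :
    (pathNodes p).length = p.length + 1 := by
  simp [pathNodes_eq hp]

lemma pathNodes_getElem_lt {p : List (V × V)} (hp : p ≠ []) {i : ℕ} (hi : i < p.length)
    (h' : i < (pathNodes p).length) : (pathNodes p)[i] = p[i].1 := by
  rw [List.getElem_of_eq (pathNodes_eq hp) h',
    List.getElem_append_left (by simpa using hi)]
  simp

lemma pathNodes_getElem_last {p : List (V × V)} (hp : p ≠ [])
    (h' : p.length < (pathNodes p).length) :
    (pathNodes p)[p.length] = (p.getLast hp).2 := by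
  rw [List.getElem_of_eq (pathNodes_eq hp) h',
    List.getElem_append_right (by simp)]
  simp

lemma snd_eq_pathNodes {p : List (V × V)} (hp : p ≠ [])
    (hc : List.Chain' (fun e f => e.2 = f.1) p) {i : ℕ} (hi : i < p.length)
    (h' : i + 1 < (pathNodes p).length) :
    p[i].2 = (pathNodes p)[i+1] := by
  rcases lt_or_eq_of_le (Nat.succ_le_of_lt hi) with h1 | h1
  · rw [pathNodes_getElem_lt hp h1 h']
    exact List.isChain_iff_getElem.mp hc i (by omega)
  · have h2 : i + 1 = p.length := h1
    simp only [h2]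
    rw [pathNodes_getElem_last hp (h2 ▸ h'), List.getLast_eq_getElem]
    simp only [← h2, Nat.add_sub_cancel]

lemma pathNodes_zero {E : Set (V × V)} {a b : V} {p : List (V × V)}
    (h : IsValidPath E a b p) (h' : 0 < (pathNodes p).length) :
    (pathNodes p)[0] = a := by
  have hp := h.ne_nil
  have hl : 0 < p.length := List.length_pos_iff.mpr hp
  rw [pathNodes_getElem_lt hp hl h']
  have := h.2.2.1
  rw [List.head?_eq_getElem?, List.getElem?_eq_getElem hl] at this
  simpa using this

lemma pathNodes_last {E : Set (V × V)} {a b : V} {p : List (V × V)}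
    (h : IsValidPath E a b p) (h' : p.length < (pathNodes p).length) :
    (pathNodes p)[p.length] = b := by
  have hp := h.ne_nil
  rw [pathNodes_getElem_last hp h']
  have := h.2.2.2
  rw [List.getLast?_eq_getLast hp] at this
  simpa using this

lemma bottleneck_le_of_mem {s : V × V → ℕ} {p : List (V × V)} {e : V × V} (he : e ∈ p) :
    bottleneck s p ≤ s e := by
  have hne : (p.map s).minimum ≠ ⊤ :=
    List.minimum_ne_top_of_ne_nil (by simp; rintro rfl; simp at he)
  obtain ⟨c, hc⟩ := WithTop.ne_top_iff_exists.mp hne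
  have h1 : (p.map s).minimum ≤ (s e : WithTop ℕ) :=
    List.minimum_le_of_mem' (List.mem_map_of_mem (f := s) he)
  rw [← hc] at h1
  calc bottleneck s p = c := by
        unfold bottleneck
        rw [← hc]
        exact WithTop.untopD_coe 0 c
    _ ≤ s e := by simpa using h1

lemma le_bottleneck {s : V × V → ℕ} {p q : List (V × V)} (hq : q ≠ [])
    (hsub : ∀ e ∈ q, e ∈ p) : bottleneck s p ≤ bottleneck s q := by
  have hne : (q.map s).minimum ≠ ⊤ :=
    List.minimum_ne_top_of_ne_nil (by simpa using hq)
  obtain ⟨c, hc⟩ := WithTop.ne_top_iff_exists.mp hne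
  obtain ⟨e, heq, hes⟩ := List.mem_map.mp (List.minimum_mem hc.symm)
  have : bottleneck s q = c := by
    unfold bottleneck
    rw [← hc]
    exact WithTop.untopD_coe 0 c
  rw [this, ← hes]
  exact bottleneck_le_of_mem (hsub e heq)

end aux

section surgery
variable {V : Type*}

lemma shorten {E : Set (V × V)} {a b : V} (hab : a ≠ b) {p : List (V × V)}
    (hp : IsValidPath E a b p) (hns : ¬ IsSimplePath p) :
    ∃ q : List (V × V), IsValidPath E a b q ∧ q.length < p.length ∧ ∀ e ∈ q, e ∈ p := by
  have hpn := hp.ne_nil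
  have hplen : 0 < p.length := List.length_pos_iff.mpr hpn
  have hlen : (pathNodes p).length = p.length + 1 := pathNodes_length hpn
  rw [IsSimplePath, List.nodup_iff_injective_get] at hns
  obtain ⟨i0, j0, hget, hne⟩ := Function.not_injective_iff.mp hns
  obtain ⟨I, J, hIJ, hJle, heq'⟩ :
      ∃ I J : ℕ, I < J ∧ J ≤ p.length ∧
        ∀ (h1 : I < (pathNodes p).length) (h2 : J < (pathNodes p).length),
          (pathNodes p)[I] = (pathNodes p)[J] := by
    rcases lt_or_gt_of_ne (Fin.val_ne_of_ne hne) with h1 | h1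
    · exact ⟨i0.1, j0.1, h1, by have := j0.isLt; omega,
        fun _ _ => by simpa [List.get_eq_getElem] using hget⟩
    · exact ⟨j0.1, i0.1, h1, by have := i0.isLt; omega,
        fun _ _ => by simpa [List.get_eq_getElem] using hget.symm⟩
  have hIlt : I < p.length := lt_of_lt_of_le hIJ hJle
  have heqIJ : (pathNodes p)[I]'(by omega) = (pathNodes p)[J]'(by omega) :=
    heq' (by omega) (by omega)
  have hN0 : (pathNodes p)[0]'(by omega) = a := pathNodes_zero hp (by omega)
  have hNm : (pathNodes p)[p.length]'(by omega) = b := pathNodes_last hp (by omega)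
  have hkey : ¬ (I = 0 ∧ J = p.length) := by
    rintro ⟨h1, h2⟩
    apply hab
    rw [← hN0, ← hNm]
    subst h1; subst h2
    exact heqIJ
  have htake_ne : 0 < I → p.take I ≠ [] := by
    intro h0 hc
    rcases List.take_eq_nil_iff.mp hc with h | h
    · omega
    · exact hpn h
  have htake_last : ∀ (_ : 0 < I), (p.take I).getLast? = some (p[I-1]'(by omega)) := by
    intro h0
    rw [List.getLast?_eq_getElem?, List.getElem?_eq_getElem (by
      simp only [List.length_take]; omega)]
    congr 1
    rw [List.getElem_take]
    congr 1
    simp only [List.length_take]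
    omega
  have hsndI : ∀ (_ : 0 < I), (p[I-1]'(by omega)).2 = (pathNodes p)[I]'(by omega) := by
    intro h0
    have hs := snd_eq_pathNodes hpn hp.2.1 (i := I - 1) (by omega) (by omega)
    rw [hs]
    congr 1
    omega
  have hdrop_ne : J < p.length → p.drop J ≠ [] := by
    intro h0 hc
    have := List.drop_eq_nil_iff.mp hc
    omega
  have hdrop_head : ∀ (h0 : J < p.length), (p.drop J).head? = some (p[J]'h0) := by
    intro h0
    rw [List.head?_eq_head (hdrop_ne h0), List.head_eq_getElem, List.getElem_drop]
    simp
  refine ⟨p.take I ++ p.drop J, ⟨?_, ?_, ?_, ?_⟩, ?_, ?_⟩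
  · intro e he
    rcases List.mem_append.mp he with h1 | h1
    · exact hp.1 e (List.mem_of_mem_take h1)
    · exact hp.1 e (List.mem_of_mem_drop h1)
  · refine List.isChain_append.mpr ⟨hp.2.1.take I, hp.2.1.drop J, ?_⟩
    intro x hx y hy
    have h0I : 0 < I := by
      by_contra h0
      have h00 : I = 0 := by omega
      rw [h00] at hx
      simp at hx
    have h0J : J < p.length := by
      by_contra h0
      have h00 : J = p.length := by omega
      rw [h00] at hy
      simp at hy
    rw [htake_last h0I] at hx
    rw [hdrop_head h0J] at hy
    cases hx
    cases hy
    rw [hsndI h0I, heqIJ]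
    exact pathNodes_getElem_lt hpn h0J _
  · rcases Nat.eq_zero_or_pos I with h0 | h0
    · have h0J : J < p.length := by
        rcases Nat.lt_or_ge J p.length with h | h
        · exact h
        · exact absurd ⟨h0, by omega⟩ hkey
      rw [show p.take I = [] by simp [h0]]
      rw [List.nil_append, hdrop_head h0J]
      have hJa : (p[J]'h0J).1 = a := by
        rw [← hN0]
        subst h0
        rw [heqIJ]
        exact (pathNodes_getElem_lt hpn h0J _).symm
      simp [hJa]
    · rw [List.head?_append, List.head?_eq_head (htake_ne h0), List.head_eq_getElem,
        List.getElem_take]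
      have hh := hp.2.2.1
      rw [List.head?_eq_getElem?, List.getElem?_eq_getElem hplen] at hh
      simpa using hh
  · rcases Nat.lt_or_ge J p.length with h0 | h0
    · rw [List.getLast?_append, List.getLast?_eq_getLast (hdrop_ne h0),
        List.getLast_eq_getElem, List.getElem_drop]
      have hh := hp.2.2.2
      rw [List.getLast?_eq_getLast hpn, List.getLast_eq_getElem] at hh
      have harg : J + ((p.drop J).length - 1) = p.length - 1 := by
        simp only [List.length_drop]; omega
      simp only [harg, Option.or_some]
      simpa using hh
    · have h0J : J = p.length := by omega
      have h0I : 0 < I := by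
        rcases Nat.eq_zero_or_pos I with h | h
        · exact absurd ⟨h, h0J⟩ hkey
        · exact h
      rw [show p.drop J = [] by simp [h0J]]
      rw [List.append_nil, htake_last h0I]
      have hb : (p[I-1]'(by omega)).2 = b := by
        rw [hsndI h0I, heqIJ]
        subst h0J
        exact hNm
      simp [hb]
  · simp only [List.length_append, List.length_take, List.length_drop]
    omega
  · intro e he
    rcases List.mem_append.mp he with h1 | h1
    · exact List.mem_of_mem_take h1
    · exact List.mem_of_mem_drop h1

end surgery

section main
variable {V : Type*}

lemma exists_simple {E : Set (V × V)} {a b : V} (hab : a ≠ b) :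
    ∀ (n : ℕ) (p : List (V × V)), p.length ≤ n → IsValidPath E a b p →
      ∃ q : List (V × V), IsValidPath E a b q ∧ IsSimplePath q ∧ ∀ e ∈ q, e ∈ p := by
  intro n
  induction n with
  | zero =>
    intro p hl hp
    exact absurd (List.length_pos_iff.mpr hp.ne_nil) (by omega)
  | succ n ih =>
    intro p hl hp
    by_cases hs : IsSimplePath p
    · exact ⟨p, hp, hs, fun e he => he⟩
    · obtain ⟨q, hq, hql, hqsub⟩ := shorten hab hp hs
      obtain ⟨r, hr, hrs, hrsub⟩ := ih q (by omega) hq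
      exact ⟨r, hr, hrs, fun e he => hqsub e (hrsub e he)⟩

end main

/-- If some valid path from `a` to `b` (`a ≠ b`) exists, then there is a valid *simple*
path from `a` to `b` whose bottleneck is maximal among the bottlenecks of all valid
paths from `a` to `b`. -/
theorem farsec_widest_path_attained_by_simple_path {V : Type*} [Fintype V]
    (E : Set (V × V)) (s : V × V → ℕ) (a b : V) (hab : a ≠ b)
    (h : ∃ p : List (V × V), IsValidPath E a b p) :
    ∃ pstar : List (V × V), IsValidPath E a b pstar ∧ IsSimplePath pstar ∧
      ∀ p : List (V × V), IsValidPath E a b p → bottleneck s p ≤ bottleneck s pstar := by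
  classical
  set B : Set ℕ := {n | ∃ p : List (V × V), IsValidPath E a b p ∧ bottleneck s p = n} with hB
  have hBne : B.Nonempty := by
    obtain ⟨p, hp⟩ := h
    exact ⟨bottleneck s p, p, hp, rfl⟩
  have hBbdd : BddAbove B := by
    refine ⟨Finset.univ.sup s, ?_⟩
    rintro n ⟨p, hp, rfl⟩
    have hpn := hp.ne_nil
    have hmem : p.head hpn ∈ p := List.head_mem hpn
    exact le_trans (bottleneck_le_of_mem hmem) (Finset.le_sup (Finset.mem_univ _))
  obtain ⟨p, hp, hpb⟩ := Nat.sSup_mem hBne hBbdd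
  obtain ⟨pstar, hstar, hsimple, hsub⟩ := exists_simple hab p.length p le_rfl hp
  refine ⟨pstar, hstar, hsimple, fun q hq => ?_⟩
  have h1 : bottleneck s q ≤ sSup B := le_csSup hBbdd ⟨q, hq, rfl⟩
  have h2 : bottleneck s p ≤ bottleneck s pstar :=
    le_bottleneck hstar.ne_nil hsub
  omega
end

section
/- (Correctness of the Floyd–Warshall update for widest paths.) Let n ∈ ℕ, let the nodes be Fin n, let E ⊆ Fin n × Fin n be an edge set and s : Fin n × Fin n → ℕ a security level function. For a set K ⊆ Fin n and nodes i, j, let W_K(i, j) ∈ WithBot ℕ denote the supremum, over all valid paths from i to j whose intermediate nodes (all nodes of the path other than i and j) lie in K, of the bottleneck of the path (with W_K(i, j) = ⊥ when no such path exists). Then for every k ∉ K and all nodes i, j: W_{K ∪ {k}}(i, j) = max( W_K(i, j), min( W_K(i, k), W_K(k, j) ) ). -/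
/-- `restrictedWidest E s K i j` is the supremum, over all valid paths from `i` to `j`
whose intermediate nodes (the sources of all edges but the first) lie in `K`, of the
bottleneck of the path, in `WithBot ℕ` (`⊥` when no such path exists). -/
noncomputable def restrictedWidest {n : ℕ} (E : Set (Fin n × Fin n))
    (s : Fin n × Fin n → ℕ) (K : Set (Fin n)) (i j : Fin n) : WithBot ℕ :=
  sSup {x : WithBot ℕ | ∃ p : List (Fin n × Fin n),
    IsValidPath E i j p ∧ (∀ v ∈ p.tail.map Prod.fst, v ∈ K) ∧
      x = (bottleneck s p : WithBot ℕ)}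

section FWaux

variable {V : Type*} {E : Set (V × V)} {a b c : V} {p : List (V × V)}

lemma fw_minimum_append (l1 l2 : List ℕ) :
    (l1 ++ l2).minimum = min l1.minimum l2.minimum := by
  induction l1 with
  | nil => simp [List.minimum_nil]
  | cons x t ih => simp [List.minimum_cons, ih, min_assoc]

lemma fw_exists_minimum {l : List ℕ} (h : l ≠ []) : ∃ m : ℕ, l.minimum = (m : WithTop ℕ) := by
  have hm := List.minimum_le_of_mem' (List.head_mem h)
  cases hmin : l.minimum with
  | top => rw [hmin] at hm; exact absurd hm (by simp)
  | coe m => exact ⟨m, rfl⟩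

lemma fw_bottleneck_le {s : V × V → ℕ} {e : V × V} (he : e ∈ p) :
    bottleneck s p ≤ s e := by
  have hne : p.map s ≠ [] := by simpa using List.ne_nil_of_mem he
  obtain ⟨m, hm⟩ := fw_exists_minimum hne
  have h1 : (p.map s).minimum ≤ (s e : WithTop ℕ) :=
    List.minimum_le_of_mem' (List.mem_map_of_mem he)
  rw [hm] at h1
  unfold bottleneck; rw [hm]; exact (WithTop.coe_le_coe.mp h1 : m ≤ s e)

lemma fw_bottleneck_append {s : V × V → ℕ} {p1 p2 : List (V × V)}
    (h1 : p1 ≠ []) (h2 : p2 ≠ []) :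
    bottleneck s (p1 ++ p2) = min (bottleneck s p1) (bottleneck s p2) := by
  obtain ⟨m1, hm1⟩ := fw_exists_minimum (l := p1.map s) (by simpa using h1)
  obtain ⟨m2, hm2⟩ := fw_exists_minimum (l := p2.map s) (by simpa using h2)
  unfold bottleneck
  rw [List.map_append, fw_minimum_append, hm1, hm2]
  have hc : (min (↑m1 : WithTop ℕ) ↑m2) = ((↑(min m1 m2) : WithTop ℕ)) := by norm_cast
  rw [hc]
  rfl

lemma fw_valid_ne_nil (h : IsValidPath E a b p) : p ≠ [] := by
  intro h0
  rw [h0] at h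
  simp [IsValidPath] at h

lemma fw_valid_append {p1 p2 : List (V × V)}
    (h1 : IsValidPath E a b p1) (h2 : IsValidPath E b c p2) :
    IsValidPath E a c (p1 ++ p2) := by
  have hn1 := fw_valid_ne_nil h1
  have hn2 := fw_valid_ne_nil h2
  obtain ⟨hE1, hC1, hh1, hl1⟩ := h1
  obtain ⟨hE2, hC2, hh2, hl2⟩ := h2
  refine ⟨?_, ?_, ?_, ?_⟩
  · intro e he; rcases List.mem_append.mp he with h | h
    · exact hE1 e h
    · exact hE2 e h
  · refine List.isChain_append.mpr ⟨hC1, hC2, ?_⟩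
    intro x hx y hy
    have hx2 : x.2 = b := by
      rw [Option.mem_def] at hx
      rw [hx] at hl1; simpa using hl1
    have hy1 : y.1 = b := by
      rw [Option.mem_def] at hy
      rw [hy] at hh2; simpa using hh2
    rw [hx2, hy1]
  · rw [List.head?_append, List.head?_eq_head hn1]
    simpa [List.head?_eq_head hn1] using hh1
  · rw [List.getLast?_append, List.getLast?_eq_getLast hn2]
    simpa [List.getLast?_eq_getLast hn2] using hl2

lemma fw_valid_split {p1 p2 : List (V × V)}
    (h : IsValidPath E a c (p1 ++ p2)) (h1 : p1 ≠ []) (h2 : p2 ≠ [])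
    (hb : (p2.head h2).1 = b) :
    IsValidPath E a b p1 ∧ IsValidPath E b c p2 := by
  obtain ⟨hE, hC, hh, hl⟩ := h
  obtain ⟨hC1, hC2, hrel⟩ := List.isChain_append.mp hC
  have hlast : (p1.getLast h1).2 = b := by
    have := hrel (p1.getLast h1) (by rw [List.getLast?_eq_getLast h1]; rfl)
      (p2.head h2) (by rw [List.head?_eq_head h2]; rfl)
    rw [this, hb]
  constructor
  · refine ⟨fun e he => hE e (List.mem_append.mpr (Or.inl he)), hC1, ?_, ?_⟩
    · rw [List.head?_append, List.head?_eq_head h1] at hh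
      simpa [List.head?_eq_head h1] using hh
    · rw [List.getLast?_eq_getLast h1]
      simp [hlast]
  · refine ⟨fun e he => hE e (List.mem_append.mpr (Or.inr he)), hC2, ?_, ?_⟩
    · rw [List.head?_eq_head h2]
      simp [hb]
    · rw [List.getLast?_append, List.getLast?_eq_getLast h2] at hl
      rw [List.getLast?_eq_getLast h2]
      simpa using hl

/-- Split a valid path at the first occurrence of `k` among its intermediate sources. -/
lemma fw_split_at_k [DecidableEq V] {k : V}
    (h : IsValidPath E a c p) (hmem : k ∈ p.tail.map Prod.fst) :
    ∃ p1 p2 : List (V × V), p = p1 ++ p2 ∧ p1 ≠ [] ∧ p2 ≠ [] ∧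
      IsValidPath E a k p1 ∧ IsValidPath E k c p2 ∧
      (∀ v ∈ p1.tail.map Prod.fst, v ∈ p.tail.map Prod.fst ∧ v ≠ k) ∧
      (∀ v ∈ p2.tail.map Prod.fst, v ∈ p.tail.map Prod.fst) := by
  obtain ⟨e, t, rfl⟩ := List.exists_cons_of_ne_nil (fw_valid_ne_nil h)
  simp only [List.tail_cons] at hmem
  set pr : V × V → Bool := fun f => f.1 ≠ k with hpr
  set l1 := t.takeWhile pr with hl1
  set l2 := t.dropWhile pr with hl2
  have hsplit : t = l1 ++ l2 := (List.takeWhile_append_dropWhile (p := pr)).symm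
  have hl2ne : l2 ≠ [] := by
    intro h0
    have hall := List.dropWhile_eq_nil_iff.mp h0
    obtain ⟨f, hf, hf1⟩ := List.mem_map.mp hmem
    have := hall f hf
    simp [hpr, hf1] at this
  have hheadk : (l2.head hl2ne).1 = k := by
    have h0 := List.head_dropWhile_not pr (l := t) (by rw [← hl2]; exact hl2ne)
    have h0' : pr (l2.head hl2ne) = false := h0
    simpa [hpr] using h0'
  have hp : e :: t = (e :: l1) ++ l2 := by rw [hsplit]; rfl
  rw [hp] at h
  obtain ⟨hv1, hv2⟩ := fw_valid_split h (by simp) hl2ne hheadk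
  refine ⟨e :: l1, l2, hp, by simp, hl2ne, hv1, hv2, ?_, ?_⟩
  · intro v hv
    simp only [List.tail_cons] at hv ⊢
    obtain ⟨f, hf, rfl⟩ := List.mem_map.mp hv
    refine ⟨List.mem_map_of_mem ((List.takeWhile_prefix pr).subset hf), ?_⟩
    have := List.mem_takeWhile_imp hf
    simpa [hpr] using this
  · intro v hv
    simp only [List.tail_cons]
    obtain ⟨f, hf, rfl⟩ := List.mem_map.mp hv
    exact List.mem_map_of_mem ((hsplit ▸ (List.suffix_append l1 l2).subset)
      ((List.tail_suffix l2).subset hf))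

end FWaux

section FWsup

variable {n : ℕ} (E : Set (Fin n × Fin n)) (s : Fin n × Fin n → ℕ)

noncomputable def fwBound : ℕ := Finset.univ.sup s

lemma fw_bottleneck_le_bound (p : List (Fin n × Fin n)) :
    bottleneck s p ≤ fwBound s := by
  rcases List.eq_nil_or_concat p with rfl | ⟨q, e, rfl⟩
  · simp [bottleneck, List.minimum_nil, fwBound]
  · exact le_trans (fw_bottleneck_le (by simp)) (Finset.le_sup (Finset.mem_univ e))

lemma fw_bddAbove (K : Set (Fin n)) (i j : Fin n) :
    BddAbove {x : WithBot ℕ | ∃ p : List (Fin n × Fin n),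
      IsValidPath E i j p ∧ (∀ v ∈ p.tail.map Prod.fst, v ∈ K) ∧
        x = (bottleneck s p : WithBot ℕ)} := by
  refine ⟨(fwBound s : WithBot ℕ), ?_⟩
  rintro x ⟨p, _, _, rfl⟩
  exact_mod_cast fw_bottleneck_le_bound s p

lemma fw_le_rW {K : Set (Fin n)} {i j : Fin n} {p : List (Fin n × Fin n)}
    (h : IsValidPath E i j p) (hc : ∀ v ∈ p.tail.map Prod.fst, v ∈ K) :
    (bottleneck s p : WithBot ℕ) ≤ restrictedWidest E s K i j :=
  le_csSup (fw_bddAbove E s K i j) ⟨p, h, hc, rfl⟩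

lemma fw_rW_le {K : Set (Fin n)} {i j : Fin n} {a : WithBot ℕ}
    (h : ∀ p : List (Fin n × Fin n), IsValidPath E i j p →
      (∀ v ∈ p.tail.map Prod.fst, v ∈ K) → (bottleneck s p : WithBot ℕ) ≤ a) :
    restrictedWidest E s K i j ≤ a := by
  rcases Set.eq_empty_or_nonempty {x : WithBot ℕ | ∃ p : List (Fin n × Fin n),
      IsValidPath E i j p ∧ (∀ v ∈ p.tail.map Prod.fst, v ∈ K) ∧
        x = (bottleneck s p : WithBot ℕ)} with hS | hS
  · rw [restrictedWidest, hS, WithBot.sSup_empty]; exact bot_le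
  · refine csSup_le hS ?_
    rintro x ⟨p, hp, hc, rfl⟩
    exact h p hp hc

lemma fw_rW_attained {K : Set (Fin n)} {i j : Fin n}
    (h : restrictedWidest E s K i j ≠ ⊥) :
    ∃ p : List (Fin n × Fin n), IsValidPath E i j p ∧
      (∀ v ∈ p.tail.map Prod.fst, v ∈ K) ∧
      restrictedWidest E s K i j = (bottleneck s p : WithBot ℕ) := by
  set S := {x : WithBot ℕ | ∃ p : List (Fin n × Fin n),
      IsValidPath E i j p ∧ (∀ v ∈ p.tail.map Prod.fst, v ∈ K) ∧
        x = (bottleneck s p : WithBot ℕ)} with hSdef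
  have hS : S.Nonempty := by
    rcases Set.eq_empty_or_nonempty S with h0 | h0
    · exact absurd (by rw [restrictedWidest, ← hSdef, h0, WithBot.sSup_empty]) h
    · exact h0
  obtain ⟨x, hx⟩ := hS
  obtain ⟨p0, hp0, hc0, hx0⟩ := hx
  have hnb : ¬ S ⊆ {⊥} := by
    intro hsub
    have := hsub ⟨p0, hp0, hc0, hx0⟩
    simp [hx0] at this
  have hsup : sSup S = ((sSup ((↑) ⁻¹' S : Set ℕ) : ℕ) : WithBot ℕ) :=
    WithBot.sSup_eq hnb (fw_bddAbove E s K i j)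
  have hTne : ((↑) ⁻¹' S : Set ℕ).Nonempty := ⟨bottleneck s p0, by rw [Set.mem_preimage, ← hx0]; exact ⟨p0, hp0, hc0, hx0⟩⟩
  have hTbdd : BddAbove ((↑) ⁻¹' S : Set ℕ) := by
    refine ⟨fwBound s, ?_⟩
    intro m hm
    rw [Set.mem_preimage] at hm
    obtain ⟨p, _, _, hmp⟩ := hm
    have : m = bottleneck s p := by exact_mod_cast hmp
    rw [this]; exact fw_bottleneck_le_bound s p
  have hmem := Nat.sSup_mem hTne hTbdd
  rw [Set.mem_preimage] at hmem
  obtain ⟨p, hp, hc, hxp⟩ := hmem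
  exact ⟨p, hp, hc, by rw [restrictedWidest, ← hSdef, hsup, hxp]⟩

/-- Key auxiliary induction: any path from `k` to `j` with intermediates in `K ∪ {k}`
has bottleneck at most the `K`-restricted widest value from `k` to `j`. -/
lemma fw_lemA (K : Set (Fin n)) (k j : Fin n) :
    ∀ N (p : List (Fin n × Fin n)), p.length ≤ N → IsValidPath E k j p →
      (∀ v ∈ p.tail.map Prod.fst, v ∈ K ∪ {k}) →
      (bottleneck s p : WithBot ℕ) ≤ restrictedWidest E s K k j := by
  intro N
  induction N with
  | zero =>
    intro p hlen hval _
    exact absurd (List.length_eq_zero_iff.mp (Nat.le_zero.mp hlen)) (fw_valid_ne_nil hval)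
  | succ N ih =>
    intro p hlen hval hcond
    by_cases hK : ∀ v ∈ p.tail.map Prod.fst, v ∈ K
    · exact fw_le_rW E s hval hK
    · push_neg at hK
      obtain ⟨v, hv, hvK⟩ := hK
      have hvk : v = k := by
        rcases hcond v hv with h | h
        · exact absurd h hvK
        · simpa using h
      rw [hvk] at hv
      obtain ⟨p1, p2, hp, hn1, hn2, _, hv2, _, hc2⟩ := fw_split_at_k hval hv
      have hlen2 : p2.length ≤ N := by
        have h1 : p.length = p1.length + p2.length := by rw [hp]; simp
        have h2 : 0 < p1.length := List.length_pos_iff.mpr hn1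
        omega
      have hcond2 : ∀ w ∈ p2.tail.map Prod.fst, w ∈ K ∪ {k} :=
        fun w hw => hcond w (hc2 w hw)
      have hb : bottleneck s p ≤ bottleneck s p2 := by
        rw [hp, fw_bottleneck_append hn1 hn2]; exact min_le_right _ _
      exact le_trans (by exact_mod_cast hb) (ih p2 hlen2 hv2 hcond2)

end FWsup

/-- Correctness of the Floyd–Warshall update for widest paths: allowing one extra
intermediate node `k ∉ K` updates the restricted widest-path value by
`W_{K ∪ {k}}(i, j) = max (W_K(i, j)) (min (W_K(i, k)) (W_K(k, j)))`. -/
theorem farsec_floyd_warshall_update {n : ℕ} (E : Set (Fin n × Fin n))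
    (s : Fin n × Fin n → ℕ) (K : Set (Fin n)) (k : Fin n) (hk : k ∉ K)
    (i j : Fin n) :
    restrictedWidest E s (K ∪ {k}) i j =
      max (restrictedWidest E s K i j)
        (min (restrictedWidest E s K i k) (restrictedWidest E s K k j)) := by
  apply le_antisymm
  · -- ≤
    refine fw_rW_le E s ?_
    intro p hval hcond
    by_cases hK : ∀ v ∈ p.tail.map Prod.fst, v ∈ K
    · exact le_trans (fw_le_rW E s hval hK) (le_max_left _ _)
    · push_neg at hK
      obtain ⟨v, hv, hvK⟩ := hK
      have hvk : v = k := by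
        rcases hcond v hv with h | h
        · exact absurd h hvK
        · simpa using h
      rw [hvk] at hv
      obtain ⟨p1, p2, hp, hn1, hn2, hv1, hv2, hc1, hc2⟩ := fw_split_at_k hval hv
      have hcond1 : ∀ w ∈ p1.tail.map Prod.fst, w ∈ K := by
        intro w hw
        obtain ⟨hwp, hwk⟩ := hc1 w hw
        rcases hcond w hwp with h | h
        · exact h
        · exact absurd (by simpa using h) hwk
      have hcond2 : ∀ w ∈ p2.tail.map Prod.fst, w ∈ K ∪ {k} :=
        fun w hw => hcond w (hc2 w hw)
      have h1 : (bottleneck s p1 : WithBot ℕ) ≤ restrictedWidest E s K i k :=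
        fw_le_rW E s hv1 hcond1
      have h2 : (bottleneck s p2 : WithBot ℕ) ≤ restrictedWidest E s K k j :=
        fw_lemA E s K k j p2.length p2 le_rfl hv2 hcond2
      have hb : (bottleneck s p : WithBot ℕ) =
          min (bottleneck s p1 : WithBot ℕ) (bottleneck s p2 : WithBot ℕ) := by
        rw [hp, fw_bottleneck_append hn1 hn2]
        exact_mod_cast rfl
      rw [hb]
      exact le_trans (min_le_min h1 h2) (le_max_right _ _)
  · -- ≥
    apply max_le
    · refine fw_rW_le E s ?_
      intro p hval hcond
      exact fw_le_rW E s hval (fun v hv => Or.inl (hcond v hv))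
    · by_cases h1 : restrictedWidest E s K i k = ⊥
      · rw [h1]; exact le_trans (min_le_left _ _) bot_le
      by_cases h2 : restrictedWidest E s K k j = ⊥
      · rw [h2]; exact le_trans (min_le_right _ _) bot_le
      obtain ⟨p1, hvp1, hcp1, heq1⟩ := fw_rW_attained E s h1
      obtain ⟨p2, hvp2, hcp2, heq2⟩ := fw_rW_attained E s h2
      have hn1 := fw_valid_ne_nil hvp1
      have hn2 := fw_valid_ne_nil hvp2
      have hval : IsValidPath E i j (p1 ++ p2) := fw_valid_append hvp1 hvp2
      have hcond : ∀ v ∈ (p1 ++ p2).tail.map Prod.fst, v ∈ K ∪ {k} := by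
        intro v hv
        rw [List.tail_append_of_ne_nil hn1, List.map_append, List.mem_append] at hv
        rcases hv with h | h
        · exact Or.inl (hcp1 v h)
        · obtain ⟨e, t, rfl⟩ := List.exists_cons_of_ne_nil hn2
          have hek : e.1 = k := by
            have := hvp2.2.2.1
            simpa using this
          simp only [List.map_cons, List.mem_cons] at h
          rcases h with rfl | h
          · exact Or.inr (by simp [hek])
          · exact Or.inl (hcp2 v (by simpa using h))
      have hb : (bottleneck s (p1 ++ p2) : WithBot ℕ) =
          min (restrictedWidest E s K i k) (restrictedWidest E s K k j) := by
        rw [heq1, heq2, fw_bottleneck_append hn1 hn2]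
        exact_mod_cast rfl
      rw [← hb]
      exact fw_le_rW E s hval hcond
end
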